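/- Let F be a linear ordered field equipped with its order topology, X a completely F-regular space, and A(X,F) an intermediate ring. If A(X,F) is von Neumann regular (for every f ∈ A(X,F) there exists g ∈ A(X,F) with f = f·g·f), then A(X,F) = C(X,F). -/

import Mathlib

open Set

/-- `Pz a` : the intersection of all minimal prime ideals of `R` which contain `a`. -/
def Pz {R : Type*} [CommRing R] (a : R) : Set R :=
  ⋂ P ∈ {P : Ideal R | P ∈ minimalPrimes R ∧ a ∈ P}, (P : Set R)

/-- A proper ideal `I` is a `z°`-ideal if `Pz a ⊆ I` for every `a ∈ I`. -/
def IsZoIdeal {R : Type*} [CommRing R] (I : Ideal R) : Prop :=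
  I ≠ ⊤ ∧ ∀ a ∈ I, Pz a ⊆ (I : Set R)

/-- The zero set `Z(f)` of a continuous function `f`. -/
def ZSet {X F : Type*} [TopologicalSpace X] [TopologicalSpace F] [Zero F]
    (f : C(X, F)) : Set X := {x | f x = 0}

/-- `f` is bounded over `X` (i.e. `f ∈ B(X,F)`). -/
def BddF {X F : Type*} [TopologicalSpace X] [Field F] [LinearOrder F] [IsStrictOrderedRing F] [TopologicalSpace F]
    (f : C(X, F)) : Prop := ∃ l : F, 0 < l ∧ ∀ x, |f x| ≤ l

/-- `X` is completely `F`-regular: Hausdorff, and points can be separated from closed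
sets by bounded `F`-valued continuous functions. -/
def CompletelyFRegular (X F : Type*) [TopologicalSpace X] [Field F] [LinearOrder F] [IsStrictOrderedRing F]
    [TopologicalSpace F] : Prop :=
  T2Space X ∧ ∀ K : Set X, IsClosed K → ∀ x ∉ K, ∃ f : C(X, F),
    BddF f ∧ f x = 0 ∧ ∀ k ∈ K, f k = 1

/-- `A` is an intermediate ring: a subring of `C(X,F)` containing all of `B(X,F)`. -/
def IsIntermediate {X F : Type*} [TopologicalSpace X] [Field F] [LinearOrder F] [IsStrictOrderedRing F]
    [TopologicalSpace F] [OrderTopology F] (A : Subring C(X, F)) : Prop :=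
  ∀ f : C(X, F), BddF f → f ∈ A

/-- An ideal of closed sets in `X`: a nonempty family of closed sets, closed under
finite unions and under passing to closed subsets. -/
def IsIdealOfClosedSets {X : Type*} [TopologicalSpace X] (P : Set (Set X)) : Prop :=
  P.Nonempty ∧ (∀ A ∈ P, IsClosed A) ∧ (∀ A ∈ P, ∀ B ∈ P, A ∪ B ∈ P) ∧
    ∀ C : Set X, IsClosed C → ∀ A ∈ P, C ⊆ A → C ∈ P

/-- `X` is an almost `P_F`-space: every nonempty zero set has nonempty interior. -/
def AlmostPF (X F : Type*) [TopologicalSpace X] [Field F] [LinearOrder F] [IsStrictOrderedRing F]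
    [TopologicalSpace F] : Prop :=
  ∀ f : C(X, F), (ZSet f).Nonempty → (interior (ZSet f)).Nonempty


/-- If an intermediate ring A(X,F) is von Neumann regular then A(X,F) = C(X,F). -/
theorem stmt6 {X F : Type*} [TopologicalSpace X] [Field F] [LinearOrder F] [IsStrictOrderedRing F]
    [TopologicalSpace F] [OrderTopology F]
    (hX : CompletelyFRegular X F)
    (A : Subring C(X, F)) (hA : IsIntermediate A)
    (hreg : ∀ f : A, ∃ g : A, f = f * g * f) :
    A = ⊤ := by
  rw [eq_top_iff]
  rintro f -
  -- denominator 1 + f^2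
  have hdcont : Continuous fun x => 1 + f x ^ 2 := by fun_prop
  set d : C(X, F) := ⟨fun x => 1 + f x ^ 2, hdcont⟩ with hd
  have hdpos : ∀ x, (0:F) < d x := fun x => by
    have : (0:F) ≤ f x ^ 2 := sq_nonneg _
    simp only [hd, ContinuousMap.coe_mk]
    linarith
  have hdne : ∀ x, d x ≠ 0 := fun x => (hdpos x).ne'
  -- g = f / d is bounded continuous
  have hgcont : Continuous fun x => f x / d x :=
    (map_continuous f).div (map_continuous d) hdne
  set g : C(X, F) := ⟨fun x => f x / d x, hgcont⟩ with hg
  have hgA : g ∈ A := by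
    apply hA
    refine ⟨1, one_pos, fun x => ?_⟩
    have h2 : |f x| ≤ d x := by
      have := sq_nonneg (|f x| - 1)
      have hsq : |f x| ^ 2 = f x ^ 2 := sq_abs _
      simp only [hd, ContinuousMap.coe_mk]
      nlinarith
    rw [hg]
    simp only [ContinuousMap.coe_mk, abs_div, abs_of_pos (hdpos x)]
    rw [div_le_one (hdpos x)]
    exact h2
  -- h = 1/d is bounded continuous
  have hhcont : Continuous fun x => (d x)⁻¹ :=
    (map_continuous d).inv₀ hdne
  set h : C(X, F) := ⟨fun x => (d x)⁻¹, hhcont⟩ with hh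
  have hhA : h ∈ A := by
    apply hA
    refine ⟨1, one_pos, fun x => ?_⟩
    have h1 : (1:F) ≤ d x := by
      have : (0:F) ≤ f x ^ 2 := sq_nonneg _
      simp only [hd, ContinuousMap.coe_mk]; linarith
    rw [hh]
    simp only [ContinuousMap.coe_mk]
    rw [abs_of_pos (inv_pos.mpr (hdpos x))]
    exact inv_le_one_of_one_le₀ h1
  -- regularity gives k with h = h*k*h, so k = d on X
  obtain ⟨k, hk⟩ := hreg ⟨h, hhA⟩
  have hkC : (h : C(X,F)) = h * (k : C(X,F)) * h := by
    exact congrArg Subtype.val hk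
  have hdA : d ∈ A := by
    have : (k : C(X,F)) = d := by
      ext x
      have := congrFun (congrArg (fun u : C(X,F) => (u : X → F)) hkC) x
      simp only [ContinuousMap.coe_mul, Pi.mul_apply, hh, ContinuousMap.coe_mk] at this
      have hne := hdne x
      field_simp at this
      nlinarith [this, sq_nonneg (d x)]
    rw [← this]; exact k.2
  -- f = g * d
  have : f = g * d := by
    ext x
    simp only [ContinuousMap.mul_apply, hg, ContinuousMap.coe_mk]
    rw [div_mul_cancel₀ _ (hdne x)]
  rw [this]
  exact mul_mem hgA hdA
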